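/- Let F : ℒⁿ → Fin be a special (pushout-preserving) functor. Then for all 0 ≤ i ≤ j ≤ n, the set F(i,j) is a quotient of the disjoint union (⨿_{k=i}^{j} F(k,k)) ⊔ (⨿_{k=i}^{j−1} F(k,k+1)); that is, the canonical map from this disjoint union to F(i,j) induced by the morphisms (k,k) → (i,j) and (k,k+1) → (i,j) in ℒⁿ is jointly surjective. -/

import Mathlib

/-!
STATEMENT 3: Let `F : ℒⁿ → Fin` be a special (pushout-preserving) functor. Then for all
`0 ≤ i ≤ j ≤ n`, the set `F(i,j)` is a quotient of the disjoint union
`(⨿_{k=i}^{j} F(k,k)) ⊔ (⨿_{k=i}^{j−1} F(k,k+1))`: the canonical map induced by the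
morphisms `(k,k) → (i,j)` and `(k,k+1) → (i,j)` in `ℒⁿ` is jointly surjective.
-/

open CategoryTheory

/-- The poset ℒⁿ: objects are pairs `(i,j)` with `0 ≤ i ≤ j ≤ n`, and a (unique)
morphism `(i,j) → (i',j')` exactly when `i' ≤ i` and `j ≤ j'`. -/
@[ext]
structure LObjN (n : ℕ) where
  i : ℕ
  j : ℕ
  hij : i ≤ j
  hn : j ≤ n

instance (n : ℕ) : PartialOrder (LObjN n) where
  le a b := b.i ≤ a.i ∧ a.j ≤ b.j
  le_refl a := ⟨le_refl _, le_refl _⟩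
  le_trans a b c h₁ h₂ := ⟨le_trans h₂.1 h₁.1, le_trans h₁.2 h₂.2⟩
  le_antisymm a b h₁ h₂ := by
    ext
    · exact le_antisymm h₂.1 h₁.1
    · exact le_antisymm h₁.2 h₂.2

/-- A functor `ℒⁿ → Fin` is special if it sends every pushout square of `ℒⁿ` (every
commutative square of `ℒⁿ` is such) to a pushout square of finite sets. -/
def Special {n : ℕ} (F : LObjN n ⥤ Type) : Prop :=
  ∀ ⦃a b c d : LObjN n⦄ (f : a ⟶ b) (g : a ⟶ c) (h : b ⟶ d) (k : c ⟶ d),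
    IsPushout f g h k → IsPushout (F.map f) (F.map g) (F.map h) (F.map k)

lemma isPushout_of_join {n : ℕ} {a b c d : LObjN n} (hab : a ≤ b) (hac : a ≤ c)
    (hbd : b ≤ d) (hcd : c ≤ d) (hjoin : ∀ e, b ≤ e → c ≤ e → d ≤ e) :
    IsPushout (homOfLE hab) (homOfLE hac) (homOfLE hbd) (homOfLE hcd) := by
  refine ⟨⟨Subsingleton.elim _ _⟩, ⟨?_⟩⟩
  exact Limits.PushoutCocone.IsColimit.mk _
    (fun s => homOfLE (hjoin _ (leOfHom s.inl) (leOfHom s.inr)))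
    (fun s => Subsingleton.elim _ _) (fun s => Subsingleton.elim _ _)
    (fun s m _ _ => Subsingleton.elim _ _)

lemma map_map {n : ℕ} (F : LObjN n ⥤ Type) {a b c : LObjN n} (h1 : a ≤ b) (h2 : b ≤ c)
    (h3 : a ≤ c) (x : F.obj a) :
    F.map (homOfLE h3) x = F.map (homOfLE h2) (F.map (homOfLE h1) x) := by
  rw [← FunctorToTypes.map_comp_apply]
  rw [Subsingleton.elim (homOfLE h1 ≫ homOfLE h2) (homOfLE h3)]

theorem stmt3 (n : ℕ) (F : LObjN n ⥤ Type) (hfin : ∀ a : LObjN n, Finite (F.obj a))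
    (hspec : Special F) (p : LObjN n) (y : F.obj p) :
    (∃ (k : ℕ) (h₁ : p.i ≤ k) (h₂ : k ≤ p.j)
        (x : F.obj ⟨k, k, le_refl k, le_trans h₂ p.hn⟩),
        F.map (homOfLE ⟨h₁, h₂⟩) x = y) ∨
    (∃ (k : ℕ) (h₁ : p.i ≤ k) (h₂ : k + 1 ≤ p.j)
        (x : F.obj ⟨k, k + 1, Nat.le_succ k, le_trans h₂ p.hn⟩),
        F.map (homOfLE ⟨h₁, h₂⟩) x = y) := by
  suffices H : ∀ m (p : LObjN n), p.j - p.i = m → ∀ y : F.obj p,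
      (∃ (k : ℕ) (h₁ : p.i ≤ k) (h₂ : k ≤ p.j)
          (x : F.obj ⟨k, k, le_refl k, le_trans h₂ p.hn⟩),
          F.map (homOfLE ⟨h₁, h₂⟩) x = y) ∨
      (∃ (k : ℕ) (h₁ : p.i ≤ k) (h₂ : k + 1 ≤ p.j)
          (x : F.obj ⟨k, k + 1, Nat.le_succ k, le_trans h₂ p.hn⟩),
          F.map (homOfLE ⟨h₁, h₂⟩) x = y) by
    exact H _ p rfl y
  intro m
  induction m using Nat.strong_induction_on with
  | _ m IH =>
    intro p hm z
    obtain ⟨i, j, hij, hn⟩ := p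
    dsimp at hm ⊢
    rcases Nat.lt_or_ge j (i + 2) with hsmall | hbig
    · rcases Nat.lt_or_ge i j with h1 | h1
      · -- j = i + 1
        have hj : j = i + 1 := by omega
        subst hj
        refine Or.inr ⟨i, le_refl _, le_refl _, z, ?_⟩
        have he : (homOfLE ⟨le_refl i, le_refl (i+1)⟩ :
            (⟨i, i+1, Nat.le_succ i, le_trans (le_refl _) hn⟩ : LObjN n) ⟶
            ⟨i, i+1, hij, hn⟩) = 𝟙 _ := Subsingleton.elim _ _
        rw [he, F.map_id]
        rfl
      · -- j = i
        have hj : i = j := by omega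
        subst hj
        refine Or.inl ⟨i, le_refl _, le_refl _, z, ?_⟩
        have he : (homOfLE ⟨le_refl i, le_refl i⟩ :
            (⟨i, i, le_refl i, le_trans (le_refl _) hn⟩ : LObjN n) ⟶
            ⟨i, i, hij, hn⟩) = 𝟙 _ := Subsingleton.elim _ _
        rw [he, F.map_id]
        rfl
    · -- j ≥ i + 2
      obtain ⟨j', rfl⟩ : ∃ j', j = j' + 1 := ⟨j - 1, by omega⟩
      have hab : (⟨i+1, j', by omega, by omega⟩ : LObjN n) ≤ ⟨i, j', by omega, by omega⟩ :=
        ⟨Nat.le_succ i, le_refl _⟩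
      have hac : (⟨i+1, j', by omega, by omega⟩ : LObjN n) ≤ ⟨i+1, j'+1, by omega, hn⟩ :=
        ⟨le_refl _, Nat.le_succ j'⟩
      have hbd : (⟨i, j', by omega, by omega⟩ : LObjN n) ≤ ⟨i, j'+1, hij, hn⟩ :=
        ⟨le_refl _, Nat.le_succ j'⟩
      have hcd : (⟨i+1, j'+1, by omega, hn⟩ : LObjN n) ≤ ⟨i, j'+1, hij, hn⟩ :=
        ⟨Nat.le_succ i, le_refl _⟩
      have hPO := hspec _ _ _ _ (isPushout_of_join hab hac hbd hcd
        (fun e h1 h2 => ⟨h1.1, h2.2⟩))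
      obtain ⟨w, x, hx⟩ := Limits.Types.jointly_surjective _ hPO.isColimit z
      have key : (∃ xb : F.obj ⟨i, j', by omega, by omega⟩, F.map (homOfLE hbd) xb = z) ∨
          (∃ xc : F.obj ⟨i+1, j'+1, by omega, hn⟩, F.map (homOfLE hcd) xc = z) := by
        cases w with
        | none =>
          rw [Limits.PushoutCocone.condition_zero] at hx
          exact Or.inl ⟨F.map (homOfLE hab) x, hx⟩
        | some arm =>
          cases arm with
          | left => exact Or.inl ⟨x, hx⟩
          | right => exact Or.inr ⟨x, hx⟩
      rcases key with ⟨xb, hxb⟩ | ⟨xc, hxc⟩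
      · rcases IH (j' - i) (by omega) ⟨i, j', by omega, by omega⟩ (by dsimp) xb with
          ⟨k, h1, h2, x', hx'⟩ | ⟨k, h1, h2, x', hx'⟩
        · dsimp at h1 h2
          refine Or.inl ⟨k, h1, by omega, x', ?_⟩
          rw [map_map F ⟨h1, h2⟩ hbd, hx', hxb]
        · dsimp at h1 h2
          refine Or.inr ⟨k, h1, by omega, x', ?_⟩
          rw [map_map F ⟨h1, h2⟩ hbd, hx', hxb]
      · rcases IH (j' - i) (by omega) ⟨i+1, j'+1, by omega, hn⟩ (by dsimp; omega) xc with
          ⟨k, h1, h2, x', hx'⟩ | ⟨k, h1, h2, x', hx'⟩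
        · dsimp at h1 h2
          refine Or.inl ⟨k, by omega, h2, x', ?_⟩
          rw [map_map F ⟨h1, h2⟩ hcd, hx', hxc]
        · dsimp at h1 h2
          refine Or.inr ⟨k, by omega, h2, x', ?_⟩
          rw [map_map F ⟨h1, h2⟩ hcd, hx', hxc]
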